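/- Let k > 0, set φ(γ) := ∫₀^∞ f(τ)·e^{−γτ} dτ, and assume the second moment m₂ := ∫₀^∞ τ² f(τ)dτ is finite. Then the steady-state mean gene-product level x̄(γ) := k/γ − (k/(2γ²m₁))·(1 − φ(γ))/(1 − φ(γ)/2) satisfies lim_{γ→0⁺} x̄(γ) = (k·m₁/2)·(3 + CV²), where CV² := (m₂ − m₁²)/m₁² is the squared coefficient of variation of the cell-cycle time. (Equation (41): mean level of a stable gene product.) -/

import Mathlib

open MeasureTheory Filter Topology

lemma aux_exp_le (x : ℝ) (hx : 0 ≤ x) : Real.exp (-x) ≤ 1 - x + x^2/2 := by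
  have h : ∀ y : ℝ, HasDerivAt (fun y => 1 - y + y^2/2 - Real.exp (-y))
      (-1 + y + Real.exp (-y)) y := by
    intro y
    have h1 : HasDerivAt (fun y : ℝ => Real.exp (-y)) (-Real.exp (-y)) y := by
      simpa [Function.comp_def] using (Real.hasDerivAt_exp (-y)).comp y ((hasDerivAt_id y).neg)
    have h2 : HasDerivAt (fun y : ℝ => 1 - y + y^2/2 - Real.exp (-y))
        (0 - 1 + (2*y^(2-1)*1)/2 - -Real.exp (-y)) y := by
      exact (((hasDerivAt_const y (1:ℝ)).sub (hasDerivAt_id y)).add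
        (((hasDerivAt_id y).pow 2).div_const 2)).sub h1
    convert h2 using 1; ring
  have hmono : MonotoneOn (fun y => 1 - y + y^2/2 - Real.exp (-y)) (Set.Ici 0) := by
    apply monotoneOn_of_deriv_nonneg (convex_Ici 0)
    · exact (Continuous.continuousOn (by fun_prop))
    · exact fun y hy => (h y).differentiableAt.differentiableWithinAt
    · intro y hy
      rw [(h y).deriv]
      have := Real.add_one_le_exp (-y)
      linarith
  have h0 : (fun y => 1 - y + y^2/2 - Real.exp (-y)) 0 ≤ (fun y => 1 - y + y^2/2 - Real.exp (-y)) x :=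
    hmono (by simp) hx hx
  simp at h0; linarith

lemma aux_exp_ge (x : ℝ) (hx : 0 ≤ x) : 1 - x + x^2/2 - x^3/6 ≤ Real.exp (-x) := by
  have h : ∀ y : ℝ, HasDerivAt (fun y => Real.exp (-y) - 1 + y - y^2/2 + y^3/6)
      (-Real.exp (-y) + 1 - y + y^2/2) y := by
    intro y
    have h1 : HasDerivAt (fun y : ℝ => Real.exp (-y)) (-Real.exp (-y)) y := by
      simpa [Function.comp_def] using (Real.hasDerivAt_exp (-y)).comp y ((hasDerivAt_id y).neg)
    have h2 : HasDerivAt (fun y : ℝ => Real.exp (-y) - 1 + y - y^2/2 + y^3/6)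
        (-Real.exp (-y) - 0 + 1 - (2*y^(2-1)*1)/2 + (3*y^(3-1)*1)/6) y := by
      exact ((((h1.sub (hasDerivAt_const y (1:ℝ))).add (hasDerivAt_id y)).sub
        (((hasDerivAt_id y).pow 2).div_const 2)).add (((hasDerivAt_id y).pow 3).div_const 6))
    convert h2 using 1; ring
  have hmono : MonotoneOn (fun y => Real.exp (-y) - 1 + y - y^2/2 + y^3/6) (Set.Ici 0) := by
    apply monotoneOn_of_deriv_nonneg (convex_Ici 0)
    · exact (Continuous.continuousOn (by fun_prop))
    · exact fun y hy => (h y).differentiableAt.differentiableWithinAt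
    · intro y hy
      rw [(h y).deriv]
      have hy' : 0 ≤ y := le_of_lt (by simpa using hy)
      have := aux_exp_le y hy'
      linarith
  have h0 := hmono (Set.self_mem_Ici) hx hx
  simp at h0; linarith

lemma stuff_nonneg (x : ℝ) (hx : 0 ≤ x) : 0 ≤ 1 - Real.exp (-x) - x + x^2/2 := by
  have := aux_exp_le x hx; linarith

lemma stuff_le_sq (x : ℝ) (hx : 0 ≤ x) : 1 - Real.exp (-x) - x + x^2/2 ≤ x^2/2 := by
  have := Real.add_one_le_exp (-x); linarith

lemma stuff_le_cube (x : ℝ) (hx : 0 ≤ x) : 1 - Real.exp (-x) - x + x^2/2 ≤ x^3/6 := by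
  have := aux_exp_ge x hx; linarith

lemma alg_xbar (k γ m₁ m₂ e b : ℝ) (hγ : γ ≠ 0) (hm₁ : m₁ ≠ 0)
    (hb : 0 < 1 + γ*b) (hbe : b = m₁ - γ*(m₂/2) + γ*e) :
    k/γ - (k/(2*γ^2*m₁)) * ((1 - (1 - γ*b))/(1 - (1 - γ*b)/2))
      = k*(m₂/2 - e + m₁*b)/(m₁*(1+γ*b)) := by
  have hb' : 1 + γ*b ≠ 0 := ne_of_gt hb
  have e1 : 1 - (1-γ*b) = γ*b := by ring
  have e2 : 1 - (1-γ*b)/2 = (1+γ*b)/2 := by ring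
  have e3 : γ*b / ((1+γ*b)/2) = 2*γ*b/(1+γ*b) := by
    rw [div_div_eq_mul_div]; ring_nf
  rw [e1, e2, e3, eq_div_iff (mul_ne_zero hm₁ hb')]
  have e4 : k/γ - k / (2 * γ ^ 2 * m₁) * (2 * γ * b / (1 + γ * b))
      = (k*(1+γ*b)*γ*m₁ - k*γ*b)/(γ^2*m₁*(1+γ*b)) := by
    field_simp
  rw [e4, div_mul_eq_mul_div, div_eq_iff (by positivity : γ^2*m₁*(1+γ*b) ≠ 0)]
  linear_combination (-(k*γ*m₁*(1+γ*b))) * hbe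

set_option maxHeartbeats 2000000 in
/-- **Equation (41): mean level of a stable gene product.** -/
theorem gene_product_mean_stable_limit
    (f : ℝ → ℝ) (hf_cont : Continuous f)
    (hf_pos : ∀ τ : ℝ, 0 < τ → 0 < f τ) (hf_supp : ∀ τ : ℝ, τ ≤ 0 → f τ = 0)
    (hf_prob : ∫ τ in Set.Ioi (0:ℝ), f τ = 1)
    (m₁ : ℝ) (hm₁ : m₁ = ∫ τ in Set.Ioi (0:ℝ), τ * f τ)
    (hm₁_int : IntegrableOn (fun τ : ℝ => τ * f τ) (Set.Ioi 0))
    (hm₁_pos : 0 < m₁)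
    (m₂ : ℝ) (hm₂ : m₂ = ∫ τ in Set.Ioi (0:ℝ), τ ^ 2 * f τ)
    (hm₂_int : IntegrableOn (fun τ : ℝ => τ ^ 2 * f τ) (Set.Ioi 0))
    (k : ℝ) (hk : 0 < k)
    (φ : ℝ → ℝ) (hφ : ∀ γ : ℝ, φ γ = ∫ τ in Set.Ioi (0:ℝ), f τ * Real.exp (-γ * τ))
    (xbar : ℝ → ℝ)
    (hxbar : ∀ γ : ℝ, xbar γ =
      k / γ - (k / (2 * γ ^ 2 * m₁)) * ((1 - φ γ) / (1 - φ γ / 2)))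
    (CV2 : ℝ) (hCV2 : CV2 = (m₂ - m₁ ^ 2) / m₁ ^ 2) :
    Tendsto xbar (nhdsWithin 0 (Set.Ioi 0)) (nhds ((k * m₁ / 2) * (3 + CV2))) := by
  have hm₁ne : m₁ ≠ 0 := ne_of_gt hm₁_pos
  -- integrability of f
  have hf_int : IntegrableOn f (Set.Ioi (0:ℝ)) := by
    have h1 : IntegrableOn f (Set.Ioc (0:ℝ) 1) := hf_cont.integrableOn_Ioc
    have h2 : IntegrableOn f (Set.Ioi (1:ℝ)) := by
      apply Integrable.mono (hm₁_int.mono_set (Set.Ioi_subset_Ioi zero_le_one))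
        (hf_cont.aestronglyMeasurable.restrict)
      filter_upwards [ae_restrict_mem measurableSet_Ioi] with τ hτ
      have h1τ : (1:ℝ) < τ := hτ
      have hfτ := hf_pos τ (by linarith)
      rw [Real.norm_eq_abs, Real.norm_eq_abs, abs_of_pos hfτ, abs_of_pos (by nlinarith)]
      nlinarith
    rw [← Set.Ioc_union_Ioi_eq_Ioi (zero_le_one (α := ℝ))]
    exact h1.union h2
  -- integrability of f * exp
  have hφint : ∀ γ : ℝ, 0 ≤ γ → IntegrableOn (fun τ => f τ * Real.exp (-γ*τ)) (Set.Ioi 0) := by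
    intro γ hγ
    apply Integrable.mono hf_int ((hf_cont.mul (by fun_prop)).aestronglyMeasurable.restrict)
    filter_upwards [ae_restrict_mem measurableSet_Ioi] with τ hτ
    have hτ0 : (0:ℝ) < τ := hτ
    have he : Real.exp (-γ*τ) ≤ 1 := Real.exp_le_one_iff.mpr (by nlinarith)
    simp only [Pi.mul_apply]
    rw [norm_mul, Real.norm_eq_abs (Real.exp _), abs_of_pos (Real.exp_pos _)]
    calc ‖f τ‖ * Real.exp (-γ*τ) ≤ ‖f τ‖ * 1 :=
          mul_le_mul_of_nonneg_left he (norm_nonneg _)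
      _ = ‖f τ‖ := mul_one _
  -- φ ≤ 1
  have hφ_le : ∀ γ : ℝ, 0 < γ → φ γ ≤ 1 := by
    intro γ hγ
    rw [hφ γ, ← hf_prob]
    apply setIntegral_mono_on (hφint γ hγ.le) hf_int measurableSet_Ioi
    intro τ hτ
    have hτ0 : (0:ℝ) < τ := hτ
    have he : Real.exp (-γ*τ) ≤ 1 := Real.exp_le_one_iff.mpr (by nlinarith)
    have := (hf_pos τ hτ0).le
    nlinarith
  -- value of the remainder integral
  have hR : ∀ γ : ℝ, 0 < γ →
      ∫ τ in Set.Ioi (0:ℝ), f τ * (1 - Real.exp (-(γ*τ)) - γ*τ + (γ*τ)^2/2)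
        = 1 - φ γ - γ*m₁ + γ^2*m₂/2 := by
    intro γ hγ
    have h1 : ∀ τ : ℝ, f τ * (1 - Real.exp (-(γ*τ)) - γ*τ + (γ*τ)^2/2)
        = f τ - f τ * Real.exp (-γ*τ) - γ*(τ*f τ) + (γ^2/2)*(τ^2*f τ) := by
      intro τ; rw [neg_mul]; ring
    simp_rw [h1]
    have s1 : ∫ τ in Set.Ioi (0:ℝ),
        (f τ - f τ * Real.exp (-γ*τ) - γ*(τ*f τ) + (γ^2/2)*(τ^2*f τ))
        = (∫ τ in Set.Ioi (0:ℝ), (f τ - f τ * Real.exp (-γ*τ) - γ*(τ*f τ)))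
          + ∫ τ in Set.Ioi (0:ℝ), (γ^2/2)*(τ^2*f τ) :=
      integral_add ((hf_int.sub (hφint γ hγ.le)).sub (hm₁_int.const_mul γ))
        (hm₂_int.const_mul (γ^2/2))
    have s2 : ∫ τ in Set.Ioi (0:ℝ), (f τ - f τ * Real.exp (-γ*τ) - γ*(τ*f τ))
        = (∫ τ in Set.Ioi (0:ℝ), (f τ - f τ * Real.exp (-γ*τ)))
          - ∫ τ in Set.Ioi (0:ℝ), γ*(τ*f τ) :=
      integral_sub (hf_int.sub (hφint γ hγ.le)) (hm₁_int.const_mul γ)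
    have s3 : ∫ τ in Set.Ioi (0:ℝ), (f τ - f τ * Real.exp (-γ*τ))
        = (∫ τ in Set.Ioi (0:ℝ), f τ)
          - ∫ τ in Set.Ioi (0:ℝ), f τ * Real.exp (-γ*τ) :=
      integral_sub hf_int (hφint γ hγ.le)
    have s4 : ∫ τ in Set.Ioi (0:ℝ), γ*(τ*f τ) = γ * ∫ τ in Set.Ioi (0:ℝ), τ*f τ :=
      integral_const_mul γ _
    have s5 : ∫ τ in Set.Ioi (0:ℝ), (γ^2/2)*(τ^2*f τ)
        = (γ^2/2) * ∫ τ in Set.Ioi (0:ℝ), τ^2*f τ :=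
      integral_const_mul (γ^2/2) _
    rw [s1, s2, s3, s4, s5, hf_prob, ← hφ γ, ← hm₁, ← hm₂]
    ring
  -- the normalized remainder
  set F : ℝ → ℝ → ℝ :=
    fun γ τ => f τ * ((1 - Real.exp (-(γ*τ)) - γ*τ + (γ*τ)^2/2)/γ^2) with hFdef
  set ε : ℝ → ℝ := fun γ => ∫ τ in Set.Ioi (0:ℝ), F γ τ with hεdef
  have hε_eq : ∀ γ : ℝ, 0 < γ →
      ε γ = (1 - φ γ - γ*m₁ + γ^2*m₂/2)/γ^2 := by
    intro γ hγ
    have h1 : ∀ τ : ℝ, F γ τ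
        = (f τ * (1 - Real.exp (-(γ*τ)) - γ*τ + (γ*τ)^2/2))/γ^2 := by
      intro τ; rw [hFdef]; ring
    simp only [hεdef]
    simp_rw [h1]
    rw [integral_div, hR γ hγ]
  -- ε → 0 by dominated convergence
  have hε0 : Tendsto ε (nhdsWithin 0 (Set.Ioi 0)) (nhds 0) := by
    have key : Tendsto (fun γ => ∫ τ in Set.Ioi (0:ℝ), F γ τ)
        (nhdsWithin 0 (Set.Ioi 0)) (nhds (∫ τ in Set.Ioi (0:ℝ), (0:ℝ))) := by
      apply tendsto_integral_filter_of_dominated_convergence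
        (fun τ => f τ * (τ^2/2))
      · filter_upwards [self_mem_nhdsWithin] with γ hγ
        exact ((hf_cont.mul (by fun_prop)).aestronglyMeasurable.restrict)
      · filter_upwards [self_mem_nhdsWithin] with γ hγ
        have hγ0 : (0:ℝ) < γ := hγ
        filter_upwards [ae_restrict_mem measurableSet_Ioi] with τ hτ
        have hτ0 : (0:ℝ) < τ := hτ
        have hx : (0:ℝ) ≤ γ*τ := by positivity
        have k0 := stuff_nonneg (γ*τ) hx
        have k2 := stuff_le_sq (γ*τ) hx
        have hfτ := (hf_pos τ hτ0).le
        rw [hFdef, Real.norm_eq_abs,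
          abs_of_nonneg (mul_nonneg hfτ (div_nonneg k0 (by positivity)))]
        apply mul_le_mul_of_nonneg_left _ hfτ
        rw [div_le_iff₀ (by positivity)]
        nlinarith
      · apply Integrable.congr (hm₂_int.const_mul (1/2 : ℝ))
        filter_upwards with τ
        ring
      · filter_upwards [ae_restrict_mem measurableSet_Ioi] with τ hτ
        have hτ0 : (0:ℝ) < τ := hτ
        apply squeeze_zero'
        · filter_upwards [self_mem_nhdsWithin] with γ hγ
          have hγ0 : (0:ℝ) < γ := hγ
          have hx : (0:ℝ) ≤ γ*τ := by positivity
          have k0 := stuff_nonneg (γ*τ) hx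
          exact mul_nonneg (hf_pos τ hτ0).le (div_nonneg k0 (by positivity))
        · filter_upwards [self_mem_nhdsWithin] with γ hγ
          have hγ0 : (0:ℝ) < γ := hγ
          have hx : (0:ℝ) ≤ γ*τ := by positivity
          have k3 := stuff_le_cube (γ*τ) hx
          show F γ τ ≤ f τ * (τ^3/6) * γ
          rw [hFdef]
          have : (1 - Real.exp (-(γ*τ)) - γ*τ + (γ*τ)^2/2)/γ^2 ≤ τ^3/6*γ := by
            rw [div_le_iff₀ (by positivity)]
            nlinarith
          calc f τ * ((1 - Real.exp (-(γ*τ)) - γ*τ + (γ*τ)^2/2)/γ^2)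
              ≤ f τ * (τ^3/6*γ) := mul_le_mul_of_nonneg_left this (hf_pos τ hτ0).le
            _ = f τ * (τ^3/6) * γ := by ring
        · have : Tendsto (fun γ : ℝ => f τ * (τ^3/6) * γ) (nhds 0)
              (nhds (f τ * (τ^3/6) * 0)) :=
            (continuous_const.mul continuous_id).tendsto 0
          simpa using this.mono_left nhdsWithin_le_nhds
    simpa using key
  have hid : Tendsto (fun γ : ℝ => γ) (nhdsWithin 0 (Set.Ioi 0)) (nhds 0) :=
    tendsto_id.mono_left nhdsWithin_le_nhds
  set B : ℝ → ℝ := fun γ => m₁ - γ*(m₂/2) + γ*ε γ with hBdef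
  have hB : Tendsto B (nhdsWithin 0 (Set.Ioi 0)) (nhds m₁) := by
    have : Tendsto B (nhdsWithin 0 (Set.Ioi 0)) (nhds (m₁ - 0*(m₂/2) + 0*0)) :=
      (tendsto_const_nhds.sub (hid.mul tendsto_const_nhds)).add (hid.mul hε0)
    simpa using this
  have hA : ∀ γ : ℝ, 0 < γ → 1 - φ γ = γ * B γ := by
    intro γ hγ
    have h := hε_eq γ hγ
    have hγ2 : (γ:ℝ)^2 ≠ 0 := by positivity
    rw [eq_div_iff hγ2] at h
    simp only [hBdef]
    linear_combination -h
  -- algebraic identity for xbar on the right of 0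
  have hxb : ∀ γ : ℝ, 0 < γ →
      xbar γ = k*(m₂/2 - ε γ + m₁ * B γ)/(m₁*(1+γ*B γ)) := by
    intro γ hγ
    have h1 : 1 - φ γ = γ * B γ := hA γ hγ
    have h2 : φ γ ≤ 1 := hφ_le γ hγ
    have h3 : 0 < 1 + γ * B γ := by linarith
    have hφval : φ γ = 1 - γ * B γ := by linarith
    rw [hxbar γ, hφval]
    exact alg_xbar k γ m₁ m₂ (ε γ) (B γ) (ne_of_gt hγ) hm₁ne h3 (by simp only [hBdef])
  -- pass to the limit
  have hlim : Tendsto (fun γ => k*(m₂/2 - ε γ + m₁ * B γ)/(m₁*(1+γ*B γ)))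
      (nhdsWithin 0 (Set.Ioi 0)) (nhds (k*(m₂/2 - 0 + m₁*m₁)/(m₁*(1+0*m₁)))) := by
    apply Tendsto.div
    · exact tendsto_const_nhds.mul
        ((tendsto_const_nhds.sub hε0).add (tendsto_const_nhds.mul hB))
    · exact tendsto_const_nhds.mul (tendsto_const_nhds.add (hid.mul hB))
    · simpa using hm₁ne
  have hval : k*(m₂/2 - 0 + m₁*m₁)/(m₁*(1+0*m₁)) = (k*m₁/2)*(3+CV2) := by
    rw [hCV2]
    field_simp
    ring
  rw [← hval]
  apply hlim.congr'
  filter_upwards [self_mem_nhdsWithin] with γ hγ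
  exact (hxb γ hγ).symm
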